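/- Let r ≥ 4 and let T = {L_1,...,L_r} be an r-set of non-intersecting type with |L_i| = k+1 for all i. Then Σ_{2 ≤ l < t ≤ r} a_{l,t} = (r-2)(k+1)/2, where a_{l,t} = |L_l ∩ L_t|. -/

import Mathlib

/-- for an `r`-set of non-intersecting type,
`Σ_{2 ≤ l < t ≤ r} a_{l,t} = (r-2)(k+1)/2` (stated multiplied by 2 to avoid
division; index `1` of the paper is the index `⟨0,_⟩` of `Fin r`). -/
theorem stmt_1 (n r k : ℕ) (hr : 4 ≤ r)
    (L : Fin r → Finset (Fin n))
    (hcard : ∀ i, (L i).card = k + 1)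
    (hpair : ∀ i j, i ≠ j → (L i ∩ L j).Nonempty)
    (htriple : ∀ i j l, i ≠ j → j ≠ l → i ≠ l → L i ∩ L j ∩ L l = ∅)
    (hunion : ∀ i : Fin r,
      Finset.univ.biUnion L = (Finset.univ.erase i).biUnion L) :
    2 * ∑ p ∈ Finset.univ.filter
        (fun p : Fin r × Fin r =>
          p.1 ≠ (⟨0, by omega⟩ : Fin r) ∧ p.2 ≠ (⟨0, by omega⟩ : Fin r) ∧ p.1 < p.2),
        (L p.1 ∩ L p.2).card = (r - 2) * (k + 1) := by
  set z : Fin r := ⟨0, by omega⟩ with hz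
  set F : Fin r × Fin r → ℕ := fun p => (L p.1 ∩ L p.2).card with hF
  have hsym : ∀ l t : Fin r, (L l ∩ L t).card = (L t ∩ L l).card := by
    intro l t; rw [Finset.inter_comm]
  -- disjointness of the pieces of L i
  have hdisj : ∀ i : Fin r, ∀ j ∈ Finset.univ.erase i, ∀ j' ∈ Finset.univ.erase i,
      j ≠ j' → Disjoint (L i ∩ L j) (L i ∩ L j') := by
    intro i j hj j' hj' hne
    rw [Finset.disjoint_left]
    intro x hx hx'
    have hji : j ≠ i := Finset.ne_of_mem_erase hj
    have hj'i : j' ≠ i := Finset.ne_of_mem_erase hj'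
    have ht := htriple i j j' (Ne.symm hji) hne (Ne.symm hj'i)
    have hxmem : x ∈ L i ∩ L j ∩ L j' := by
      simp only [Finset.mem_inter] at hx hx' ⊢
      exact ⟨hx, hx'.2⟩
    rw [ht] at hxmem
    exact absurd hxmem (Finset.notMem_empty x)
  have hcover : ∀ i : Fin r,
      (Finset.univ.erase i).biUnion (fun j => L i ∩ L j) = L i := by
    intro i
    apply Finset.Subset.antisymm
    · intro x hx
      simp only [Finset.mem_biUnion] at hx
      obtain ⟨j, _, hxj⟩ := hx
      exact (Finset.mem_inter.mp hxj).1
    · intro x hx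
      have hx1 : x ∈ Finset.univ.biUnion L :=
        Finset.mem_biUnion.mpr ⟨i, Finset.mem_univ i, hx⟩
      rw [hunion i] at hx1
      obtain ⟨j, hj, hxj⟩ := Finset.mem_biUnion.mp hx1
      exact Finset.mem_biUnion.mpr ⟨j, hj, Finset.mem_inter.mpr ⟨hx, hxj⟩⟩
  have key : ∀ i : Fin r, ∑ j ∈ Finset.univ.erase i, (L i ∩ L j).card = k + 1 := by
    intro i
    rw [← Finset.card_biUnion (hdisj i), hcover i, hcard i]
  set A : Finset (Fin r) := Finset.univ.erase z with hA
  set SLT := Finset.univ.filter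
      (fun p : Fin r × Fin r => p.1 ≠ z ∧ p.2 ≠ z ∧ p.1 < p.2) with hSLT
  set SGT := Finset.univ.filter
      (fun p : Fin r × Fin r => p.1 ≠ z ∧ p.2 ≠ z ∧ p.2 < p.1) with hSGT
  set SNE := Finset.univ.filter
      (fun p : Fin r × Fin r => p.1 ≠ z ∧ p.2 ≠ z ∧ p.1 ≠ p.2) with hSNE
  have hswap : ∑ p ∈ SGT, F p = ∑ p ∈ SLT, F p := by
    apply Finset.sum_nbij' (i := Prod.swap) (j := Prod.swap)
    · intro p hp
      simp only [hSGT, hSLT, Finset.mem_filter, Finset.mem_univ, true_and] at hp ⊢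
      exact ⟨hp.2.1, hp.1, hp.2.2⟩
    · intro p hp
      simp only [hSGT, hSLT, Finset.mem_filter, Finset.mem_univ, true_and] at hp ⊢
      exact ⟨hp.2.1, hp.1, hp.2.2⟩
    · intro p _; simp
    · intro p _; simp
    · intro p _; exact hsym p.1 p.2
  have hsplit : SNE = SLT ∪ SGT := by
    ext p
    simp only [hSNE, hSLT, hSGT, Finset.mem_union, Finset.mem_filter, Finset.mem_univ,
      true_and]
    constructor
    · rintro ⟨h1, h2, h3⟩
      rcases lt_or_gt_of_ne h3 with h | h
      · exact Or.inl ⟨h1, h2, h⟩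
      · exact Or.inr ⟨h1, h2, h⟩
    · rintro (⟨h1, h2, h3⟩ | ⟨h1, h2, h3⟩)
      · exact ⟨h1, h2, ne_of_lt h3⟩
      · exact ⟨h1, h2, (ne_of_lt h3).symm⟩
  have hdisjLTGT : Disjoint SLT SGT := by
    rw [Finset.disjoint_left]
    intro p hp hp'
    simp only [hSLT, hSGT, Finset.mem_filter] at hp hp'
    exact absurd hp'.2.2.2 (not_lt.mpr (le_of_lt hp.2.2.2))
  have hdouble : ∑ p ∈ SNE, F p = 2 * ∑ p ∈ SLT, F p := by
    rw [hsplit, Finset.sum_union hdisjLTGT, hswap]; ring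
  -- rewrite SNE sum as nested sum
  have hne_prod : SNE = (A ×ˢ A).filter (fun p => p.1 ≠ p.2) := by
    ext p
    simp only [hSNE, hA, Finset.mem_filter, Finset.mem_product, Finset.mem_erase,
      Finset.mem_univ, true_and, and_true]
    tauto
  have hnested : ∑ p ∈ SNE, F p = ∑ l ∈ A, ∑ t ∈ A.erase l, F (l, t) := by
    rw [hne_prod, Finset.sum_filter, Finset.sum_product]
    apply Finset.sum_congr rfl
    intro l _
    rw [← Finset.sum_filter]
    apply Finset.sum_congr
    · ext t
      simp only [Finset.mem_filter, Finset.mem_erase]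
      tauto
    · intros; rfl
  have hrowsum : ∀ l ∈ A, (∑ t ∈ A.erase l, F (l, t)) + F (l, z) = k + 1 := by
    intro l hl
    have hlz : l ≠ z := Finset.ne_of_mem_erase hl
    have hzA : z ∈ Finset.univ.erase l := Finset.mem_erase.mpr ⟨Ne.symm hlz, Finset.mem_univ z⟩
    have : A.erase l = (Finset.univ.erase l).erase z := by
      ext x
      simp only [hA, Finset.mem_erase, Finset.mem_univ, and_true]
      tauto
    rw [this]
    have := Finset.sum_erase_add (Finset.univ.erase l) (fun t => F (l, t)) hzA
    rw [this, key l]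
  have hcol : ∑ l ∈ A, F (l, z) = k + 1 := by
    calc ∑ l ∈ A, F (l, z) = ∑ l ∈ A, F (z, l) := by
          apply Finset.sum_congr rfl; intro l _; exact hsym l z
      _ = k + 1 := key z
  have hcardA : A.card = r - 1 := by
    rw [hA, Finset.card_erase_of_mem (Finset.mem_univ z), Finset.card_univ, Fintype.card_fin]
  have htotal : (∑ p ∈ SNE, F p) + (k + 1) = (r - 1) * (k + 1) := by
    have h1 : ∑ l ∈ A, ((∑ t ∈ A.erase l, F (l, t)) + F (l, z))
        = (r - 1) * (k + 1) := by
      rw [Finset.sum_congr rfl hrowsum, Finset.sum_const, hcardA, smul_eq_mul]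
    rw [Finset.sum_add_distrib, hcol] at h1
    rw [hnested]
    exact h1
  have hfinal : (r - 1) * (k + 1) = (r - 2) * (k + 1) + (k + 1) := by
    have : r - 1 = (r - 2) + 1 := by omega
    rw [this, add_mul, one_mul]
  rw [hdouble] at htotal
  have hgoal : 2 * ∑ p ∈ SLT, F p = (r - 2) * (k + 1) := by omega
  exact hgoal
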